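/- Let a > 1 be a real number and let p be a complex number with Re(p) > 0. For τ ≥ 0 let m(τ) denote the number of positive integers n with n + a ≤ e^τ, i.e. m(τ) = max(⌊e^τ − a⌋, 0). Then for every complex z with |z| < 1, the Lerch transcendent satisfies Σ_{n=0}^∞ z^n/(n+a)^p = 1/a^p + z/(1−z) + (p z/(z−1)) ∫_0^∞ e^{−p τ} z^{m(τ)} dτ. -/

import Mathlib

open MeasureTheory

/-- `mCount a τ` is the number of positive integers `n` with `n + a ≤ e^τ`. -/
noncomputable def mCount (a : ℝ) (τ : ℝ) : ℕ :=
  Set.ncard {n : ℕ | 0 < n ∧ (n : ℝ) + a ≤ Real.exp τ}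

lemma mCount_eq_floor (a : ℝ) (τ : ℝ) :
    mCount a τ = (⌊Real.exp τ - a⌋).toNat := by
  have hset : {n : ℕ | 0 < n ∧ (n : ℝ) + a ≤ Real.exp τ}
      = Set.Icc 1 (⌊Real.exp τ - a⌋).toNat := by
    ext n
    simp only [Set.mem_setOf_eq, Set.mem_Icc]
    constructor
    · rintro ⟨h1, h2⟩
      have h3 : (n : ℤ) ≤ ⌊Real.exp τ - a⌋ := by
        rw [Int.le_floor]; push_cast; linarith
      omega
    · rintro ⟨h1, h2⟩
      have h3 : (n : ℤ) ≤ ⌊Real.exp τ - a⌋ := by omega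
      rw [Int.le_floor] at h3
      push_cast at h3
      exact ⟨h1, by linarith⟩
  rw [mCount, hset, ← Finset.coe_Icc, Set.ncard_coe_finset, Nat.card_Icc]
  omega

lemma cexp_integral_Ioi (p : ℂ) (hp : 0 < p.re) (T : ℝ) :
    ∫ τ in Set.Ioi T, Complex.exp (-(p * (τ : ℂ))) = Complex.exp (-(p * (T : ℂ))) / p := by
  have hp0 : p ≠ 0 := fun h => by simp [h] at hp
  have hderiv : ∀ x ∈ Set.Ici T,
      HasDerivAt (fun τ : ℝ => -(Complex.exp (-(p * (τ : ℂ))) / p))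
        (Complex.exp (-(p * (x : ℂ)))) x := by
    intro x _
    have h1 : HasDerivAt (fun τ : ℝ => -(p * (τ : ℂ))) (-p) x := by
      have h0 := ((Complex.ofRealCLM.hasDerivAt (x := x)).const_mul p).neg
      simpa [Pi.neg_def] using h0
    have h3 := (h1.cexp.div_const p).neg
    convert h3 using 1
    · rfl
    · rfl
    · field_simp
  have hint : IntegrableOn (fun τ : ℝ => Complex.exp (-(p * (τ : ℂ)))) (Set.Ioi T) := by
    apply Integrable.mono' (exp_neg_integrableOn_Ioi T hp)
    · exact (Complex.continuous_exp.comp (by continuity)).aestronglyMeasurable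
    · filter_upwards with x
      rw [Complex.norm_exp]
      simp [mul_comm]
  have htend : Filter.Tendsto (fun τ : ℝ => -(Complex.exp (-(p * (τ : ℂ))) / p))
      Filter.atTop (nhds 0) := by
    rw [tendsto_zero_iff_norm_tendsto_zero]
    have : (fun τ : ℝ => ‖-(Complex.exp (-(p * (τ : ℂ))) / p)‖)
        = fun τ : ℝ => Real.exp (-(p.re * τ)) / ‖p‖ := by
      funext τ
      rw [norm_neg, norm_div, Complex.norm_exp]
      simp
    rw [this]
    have h0 : Filter.Tendsto (fun τ : ℝ => Real.exp (-(p.re * τ))) Filter.atTop (nhds 0) :=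
      Real.tendsto_exp_atBot.comp
        (Filter.tendsto_neg_atTop_atBot.comp ((Filter.tendsto_id (α := ℝ)).const_mul_atTop hp))
    simpa using h0.div_const ‖p‖
  have := integral_Ioi_of_hasDerivAt_of_tendsto' hderiv hint htend
  rw [this]
  ring

lemma rexp_integral_Ioi (c : ℝ) (hc : 0 < c) :
    ∫ x in Set.Ioi (0:ℝ), Real.exp (-(c * x)) = 1 / c := by
  have h := integral_comp_mul_left_Ioi (fun x => Real.exp (-x)) 0 hc
  simp only [mul_zero, smul_eq_mul] at h
  rw [h, integral_exp_neg_Ioi]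
  simp [one_div]

lemma mem_iff_lt_mCount (a : ℝ) (ha : 1 < a) (τ : ℝ) (n : ℕ) :
    Real.log ((n : ℝ) + 1 + a) ≤ τ ↔ n < mCount a τ := by
  have hpos : (0:ℝ) < (n : ℝ) + 1 + a := by positivity
  rw [mCount_eq_floor, Real.log_le_iff_le_exp hpos]
  constructor
  · intro h
    have h2 : (n : ℤ) + 1 ≤ ⌊Real.exp τ - a⌋ := by
      rw [Int.le_floor]; push_cast; linarith
    omega
  · intro h
    have h2 : (n : ℤ) + 1 ≤ ⌊Real.exp τ - a⌋ := by omega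
    rw [Int.le_floor] at h2
    push_cast at h2
    linarith

lemma cexp_integrableOn_Ioi (p : ℂ) (hp : 0 < p.re) (T : ℝ) :
    IntegrableOn (fun τ : ℝ => Complex.exp (-(p * (τ : ℂ)))) (Set.Ioi T) := by
  apply Integrable.mono' (exp_neg_integrableOn_Ioi T hp)
  · exact (Complex.continuous_exp.comp (by continuity)).aestronglyMeasurable
  · filter_upwards with x
    rw [Complex.norm_exp]
    simp [mul_comm]

theorem lerch_transcendent_integral_representation
    (a : ℝ) (ha : 1 < a) (p : ℂ) (hp : 0 < p.re) :
    (∀ τ : ℝ, 0 ≤ τ → mCount a τ = (⌊Real.exp τ - a⌋).toNat) ∧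
    ∀ z : ℂ, ‖z‖ < 1 →
      ∑' n : ℕ, z ^ n / (((n : ℝ) + a : ℝ) : ℂ) ^ p =
        1 / ((a : ℂ) ^ p) + z / (1 - z) +
          (p * z / (z - 1)) *
            ∫ τ in Set.Ioi (0 : ℝ), Complex.exp (-(p * (τ : ℂ))) * z ^ (mCount a τ) := by
  constructor
  · exact fun τ _ => mCount_eq_floor a τ
  intro z hz
  have ha0 : (0:ℝ) < a := lt_trans one_pos ha
  have hz1 : z ≠ 1 := by
    intro h; rw [h] at hz; simp at hz
  have hzn : ‖z‖ < 1 := hz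
  have hp0 : p ≠ 0 := fun h => by simp [h] at hp
  -- cpow facts
  have hcpow : ∀ x : ℝ, 0 < x → ((x : ℂ)) ^ p = Complex.exp (p * Real.log x) := by
    intro x hx
    rw [Complex.cpow_def_of_ne_zero (by exact_mod_cast hx.ne'), Complex.ofReal_log hx.le,
      mul_comm]
  have hcpow_ne : ∀ x : ℝ, 0 < x → ((x : ℂ)) ^ p ≠ 0 := by
    intro x hx; rw [hcpow x hx]; exact Complex.exp_ne_zero _
  have hcpow_inv : ∀ x : ℝ, 0 < x →
      Complex.exp (-(p * ((Real.log x : ℝ) : ℂ))) = (((x : ℂ)) ^ p)⁻¹ := by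
    intro x hx
    rw [hcpow x hx, ← Complex.exp_neg]
  -- summability of the main series
  have hsum : Summable (fun n : ℕ => z ^ n / (((n : ℝ) + a : ℝ) : ℂ) ^ p) := by
    apply Summable.of_norm
    refine Summable.of_nonneg_of_le (fun n => norm_nonneg _) (fun n => ?_)
      (summable_geometric_of_lt_one (norm_nonneg z) hzn)
    have hx : (0:ℝ) < (n : ℝ) + a := by positivity
    rw [norm_div, norm_pow]
    rw [Complex.norm_cpow_eq_rpow_re_of_pos hx]
    have hn0 : (0:ℝ) ≤ (n : ℝ) := Nat.cast_nonneg n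
    have h2 : (1:ℝ) ≤ ((n : ℝ) + a) ^ p.re :=
      Real.one_le_rpow (by linarith) hp.le
    exact div_le_self (pow_nonneg (norm_nonneg z) n) h2
  -- the family of indicator functions
  set L : ℕ → ℝ := fun n => Real.log ((n : ℝ) + 1 + a) with hLdef
  set F : ℕ → ℝ → ℂ := fun n τ =>
    (Set.Ici (L n)).indicator (fun τ => z ^ (n + 1) * Complex.exp (-(p * (τ : ℂ)))) τ with hFdef
  have hLpos : ∀ n : ℕ, 0 < L n := by
    intro n
    apply Real.log_pos
    have : (0:ℝ) ≤ (n : ℝ) := Nat.cast_nonneg n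
    linarith
  have hmeasF : ∀ n : ℕ, AEStronglyMeasurable (F n) (volume.restrict (Set.Ioi (0:ℝ))) := by
    intro n
    exact ((continuous_const.mul
      (Complex.continuous_exp.comp (by continuity))).aestronglyMeasurable).indicator
      measurableSet_Ici
  have hgint : ∀ n : ℕ, IntegrableOn (fun τ : ℝ => ‖z‖ ^ n * Real.exp (-(p.re * τ)))
      (Set.Ioi (0:ℝ)) := by
    intro n
    have h := (exp_neg_integrableOn_Ioi 0 hp).const_mul (‖z‖ ^ n)
    rw [IntegrableOn]; simpa [neg_mul] using h
  have hFbound : ∀ (n : ℕ) (τ : ℝ), ‖F n τ‖ ≤ ‖z‖ ^ n * Real.exp (-(p.re * τ)) := by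
    intro n τ
    have hle : ‖z ^ (n+1) * Complex.exp (-(p * (τ : ℂ)))‖ ≤ ‖z‖ ^ n * Real.exp (-(p.re * τ)) := by
      rw [norm_mul, norm_pow, Complex.norm_exp]
      have h1 : ‖z‖ ^ (n+1) ≤ ‖z‖ ^ n :=
        pow_le_pow_of_le_one (norm_nonneg z) hzn.le (Nat.le_succ n)
      have h2 : (-(p * (τ : ℂ))).re = -(p.re * τ) := by simp
      rw [h2]
      exact mul_le_mul_of_nonneg_right h1 (Real.exp_nonneg _)
    by_cases hmem : τ ∈ Set.Ici (L n)
    · rw [hFdef]; simp only [Set.indicator_of_mem hmem]; exact hle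
    · rw [hFdef]; simp only [Set.indicator_of_notMem hmem, norm_zero]
      positivity
  have hFint : ∀ n : ℕ, IntegrableOn (F n) (Set.Ioi (0:ℝ)) := by
    intro n
    exact Integrable.mono' (hgint n) (hmeasF n)
      (Filter.Eventually.of_forall fun τ => hFbound n τ)
  have hFnorm : ∀ n : ℕ, (∫ τ in Set.Ioi (0:ℝ), ‖F n τ‖) ≤ ‖z‖ ^ n * (1 / p.re) := by
    intro n
    have h1 : (∫ τ in Set.Ioi (0:ℝ), ‖F n τ‖)
        ≤ ∫ τ in Set.Ioi (0:ℝ), ‖z‖ ^ n * Real.exp (-(p.re * τ)) := by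
      apply integral_mono_of_nonneg
        (Filter.Eventually.of_forall fun τ => norm_nonneg _) (hgint n)
        (Filter.Eventually.of_forall fun τ => hFbound n τ)
    rw [integral_const_mul, rexp_integral_Ioi p.re hp] at h1
    exact h1
  have hFsum : Summable fun n : ℕ => ∫ τ in Set.Ioi (0:ℝ), ‖F n τ‖ :=
    Summable.of_nonneg_of_le (fun n => integral_nonneg fun τ => norm_nonneg _) hFnorm
      ((summable_geometric_of_lt_one (norm_nonneg z) hzn).mul_right (1 / p.re))
  have hFval : ∀ n : ℕ, (∫ τ in Set.Ioi (0:ℝ), F n τ)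
      = z ^ (n+1) * (((((n:ℝ) + 1 + a : ℝ)) : ℂ) ^ p)⁻¹ / p := by
    intro n
    have hsub : Set.Ici (L n) ⊆ Set.Ioi (0:ℝ) := fun x hx => lt_of_lt_of_le (hLpos n) hx
    have hxpos : (0:ℝ) < (n : ℝ) + 1 + a := by positivity
    rw [hFdef]
    simp only []
    rw [setIntegral_indicator measurableSet_Ici,
      Set.inter_eq_self_of_subset_right hsub, integral_Ici_eq_integral_Ioi,
      integral_const_mul, cexp_integral_Ioi p hp (L n), hLdef]
    simp only []
    rw [hcpow_inv _ hxpos]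
    ring
  have hinter := integral_tsum_of_summable_integral_norm hFint hFsum
  -- pointwise evaluation of the tsum
  have hpt : ∀ τ : ℝ, (∑' n : ℕ, F n τ)
      = Complex.exp (-(p * (τ : ℂ))) * (z ^ (mCount a τ + 1) - z) / (z - 1) := by
    intro τ
    have hzero : ∀ n ∉ Finset.range (mCount a τ), F n τ = 0 := by
      intro n hn
      rw [hFdef]
      apply Set.indicator_of_notMem
      intro hmem
      exact hn (Finset.mem_range.mpr ((mem_iff_lt_mCount a ha τ n).mp (Set.mem_Ici.mp hmem)))
    rw [tsum_eq_sum hzero]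
    have hterm : ∀ n ∈ Finset.range (mCount a τ),
        F n τ = z ^ (n+1) * Complex.exp (-(p * (τ : ℂ))) := by
      intro n hn
      rw [hFdef]
      exact Set.indicator_of_mem
        (Set.mem_Ici.mpr ((mem_iff_lt_mCount a ha τ n).mpr (Finset.mem_range.mp hn))) _
    rw [Finset.sum_congr rfl hterm, ← Finset.sum_mul]
    have hgeom : (∑ n ∈ Finset.range (mCount a τ), z ^ (n+1))
        = (z ^ (mCount a τ + 1) - z) / (z - 1) := by
      have h := geom_sum_eq hz1 (mCount a τ)
      have h2 : (∑ n ∈ Finset.range (mCount a τ), z ^ (n+1))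
          = z * ∑ n ∈ Finset.range (mCount a τ), z ^ n := by
        rw [Finset.mul_sum]
        exact Finset.sum_congr rfl fun n _ => by ring
      rw [h2, h]
      have hzne : z - 1 ≠ 0 := sub_ne_zero.mpr hz1
      field_simp
      ring
    rw [hgeom]
    ring
  -- measurability of τ ↦ z ^ mCount a τ
  have hm : Measurable fun τ : ℝ => (z : ℂ) ^ (mCount a τ) := by
    have h1 : Measurable fun τ : ℝ => ⌊Real.exp τ - a⌋ :=
      Int.measurable_floor.comp (Real.continuous_exp.measurable.sub measurable_const)
    have h2 : (fun τ : ℝ => (z : ℂ) ^ (mCount a τ))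
        = (fun k : ℤ => z ^ k.toNat) ∘ fun τ => ⌊Real.exp τ - a⌋ := by
      funext τ
      simp [mCount_eq_floor]
    rw [h2]
    exact Measurable.comp Measurable.of_discrete h1
  have hIint : IntegrableOn
      (fun τ : ℝ => Complex.exp (-(p * (τ : ℂ))) * z ^ (mCount a τ)) (Set.Ioi (0:ℝ)) := by
    apply Integrable.mono' (exp_neg_integrableOn_Ioi 0 hp)
    · exact ((Complex.continuous_exp.comp (by continuity)).measurable.mul hm).aestronglyMeasurable
    · filter_upwards with τ
      rw [norm_mul, Complex.norm_exp]
      have h1 : ‖z ^ mCount a τ‖ ≤ 1 := by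
        rw [norm_pow]
        exact pow_le_one₀ (norm_nonneg z) hzn.le
      have h2 : (-(p * (τ : ℂ))).re = -p.re * τ := by simp
      calc Real.exp ((-(p * (τ:ℂ))).re) * ‖z ^ mCount a τ‖
          ≤ Real.exp ((-(p * (τ:ℂ))).re) * 1 :=
            mul_le_mul_of_nonneg_left h1 (Real.exp_nonneg _)
        _ = Real.exp (-p.re * τ) := by rw [mul_one, h2]
  have hexpint := cexp_integrableOn_Ioi p hp 0
  -- split the integral
  have hsplit : (∫ τ in Set.Ioi (0:ℝ),
        Complex.exp (-(p * (τ : ℂ))) * (z ^ (mCount a τ + 1) - z) / (z - 1))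
      = ((∫ τ in Set.Ioi (0:ℝ), Complex.exp (-(p * (τ : ℂ))) * z ^ (mCount a τ)) * z
          - (1 / p) * z) / (z - 1) := by
    have h1 : ∀ τ : ℝ, Complex.exp (-(p * (τ : ℂ))) * (z ^ (mCount a τ + 1) - z) / (z - 1)
        = (Complex.exp (-(p * (τ : ℂ))) * z ^ (mCount a τ) * z
            - Complex.exp (-(p * (τ : ℂ))) * z) / (z - 1) := by
      intro τ
      rw [pow_succ]
      ring
    simp_rw [h1]
    rw [integral_div, integral_sub (hIint.mul_const z) (hexpint.mul_const z),
      integral_mul_const, integral_mul_const, cexp_integral_Ioi p hp 0]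
    norm_num
  -- identify the tail series with p * the sum of integrals
  have hLHS : (∑' n : ℕ, z ^ (n+1) / ((((n:ℝ) + 1 + a : ℝ)) : ℂ) ^ p)
      = p * ∑' n : ℕ, ∫ τ in Set.Ioi (0:ℝ), F n τ := by
    rw [← tsum_mul_left]
    apply tsum_congr
    intro n
    rw [hFval n]
    have hxpos : (0:ℝ) < (n:ℝ) + 1 + a := by positivity
    have hne := hcpow_ne _ hxpos
    push_cast at hne ⊢
    field_simp
  -- put everything together
  have htail : (∑' n : ℕ, z ^ (n+1) / ((((n:ℝ) + 1 + a : ℝ)) : ℂ) ^ p)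
      = z / (1 - z) + (p * z / (z - 1)) *
          ∫ τ in Set.Ioi (0:ℝ), Complex.exp (-(p * (τ : ℂ))) * z ^ (mCount a τ) := by
    have hfun : (fun τ : ℝ => ∑' n : ℕ, F n τ)
        = fun τ : ℝ => Complex.exp (-(p * (τ:ℂ))) * (z ^ (mCount a τ + 1) - z) / (z - 1) :=
      funext hpt
    rw [hLHS, hinter, hfun, hsplit]
    have hzne : z - 1 ≠ 0 := sub_ne_zero.mpr hz1
    have h1zne : (1:ℂ) - z ≠ 0 := by
      intro h
      apply hzne
      linear_combination -h
    field_simp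
    ring
  rw [hsum.tsum_eq_zero_add]
  have hzeroterm : z ^ (0:ℕ) / ((((0:ℕ):ℝ) + a : ℝ) : ℂ) ^ p = 1 / ((a : ℂ) ^ p) := by
    norm_num
  have hcast : (∑' n : ℕ, z ^ (n+1) / ((((n+1 : ℕ) : ℝ) + a : ℝ) : ℂ) ^ p)
      = ∑' n : ℕ, z ^ (n+1) / ((((n:ℝ) + 1 + a : ℝ)) : ℂ) ^ p := by
    apply tsum_congr
    intro n
    norm_num
  rw [hzeroterm, hcast, htail, add_assoc]
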